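/- For every wheel graph W_n = C_{n−1} ∨ K_1 with n > 4, mvd(W_n) = 1. -/

import Mathlib

open SimpleGraph

variable {V : Type*}

/-- `S` is a set of vertices (not containing `x` or `y`) whose removal separates `x` from `y`:
every walk from `x` to `y` meets `S`. -/
def IsSepSet (G : SimpleGraph V) (S : Set V) (x y : V) : Prop :=
  x ∉ S ∧ y ∉ S ∧ ∀ p : G.Walk x y, ∃ v ∈ p.support, v ∈ S

/-- `τ` is an MVD-coloring of `G`: every pair of distinct nonadjacent vertices is
separated by a monochromatic vertex cut. -/
def IsMVDColoring (G : SimpleGraph V) (τ : V → ℕ) : Prop :=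
  ∀ x y : V, x ≠ y → ¬ G.Adj x y →
    ∃ S : Set V, IsSepSet G S x y ∧ ∀ u ∈ S, ∀ w ∈ S, τ u = τ w

/-- The monochromatic vertex-disconnection number: the maximum number of colors
used by an MVD-coloring of `G`. -/
noncomputable def mvd (G : SimpleGraph V) : ℕ :=
  sSup {k | ∃ τ : V → ℕ, IsMVDColoring G τ ∧ (Set.range τ).ncard = k}

/-- The wheel graph `W_n`: the join of a cycle of order `n - 1` with one extra vertex. -/
def wheelGraph (n : ℕ) : SimpleGraph (Fin (n - 1) ⊕ Unit) :=
  SimpleGraph.fromRel (fun x y =>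
    (∃ a b, x = Sum.inl a ∧ y = Sum.inl b ∧ (cycleGraph (n - 1)).Adj a b) ∨
      (x.isLeft ∧ y.isRight))

lemma sep_compl {G : SimpleGraph V} {x y : V} (hxy : x ≠ y) (hadj : ¬ G.Adj x y) :
    IsSepSet G ({x, y}ᶜ : Set V) x y := by
  refine ⟨by simp, by simp, ?_⟩
  intro p
  cases p with
  | nil => exact absurd rfl hxy
  | @cons _ v _ h q =>
    refine ⟨v, by simp [Walk.support_cons, q.start_mem_support], ?_⟩
    simp only [Set.mem_compl_iff, Set.mem_insert_iff, Set.mem_singleton_iff]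
    rintro (rfl | rfl)
    · exact G.irrefl h
    · exact hadj h

lemma const_isMVD (G : SimpleGraph V) : IsMVDColoring G (fun _ => 0) := by
  intro x y hxy hadj
  exact ⟨{x, y}ᶜ, sep_compl hxy hadj, fun _ _ _ _ => rfl⟩

lemma wheel_adj_hub {n : ℕ} (a : Fin (n - 1)) :
    (wheelGraph n).Adj (Sum.inl a) (Sum.inr ()) := by
  rw [wheelGraph, SimpleGraph.fromRel_adj]
  exact ⟨by simp, Or.inl (Or.inr ⟨by simp, by simp⟩)⟩

lemma wheel_adj_rim {n : ℕ} {a b : Fin (n - 1)} (h : (cycleGraph (n - 1)).Adj a b) :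
    (wheelGraph n).Adj (Sum.inl a) (Sum.inl b) := by
  rw [wheelGraph, SimpleGraph.fromRel_adj]
  exact ⟨by simpa using h.ne, Or.inl (Or.inl ⟨a, b, rfl, rfl, h⟩)⟩

lemma wheel_not_adj_rim {n : ℕ} {a b : Fin (n - 1)} (h : ¬ (cycleGraph (n - 1)).Adj a b) :
    ¬ (wheelGraph n).Adj (Sum.inl a) (Sum.inl b) := by
  rw [wheelGraph, SimpleGraph.fromRel_adj]
  rintro ⟨hne, (⟨c, d, hc, hd, hcd⟩ | ⟨_, hr⟩) | (⟨c, d, hc, hd, hcd⟩ | ⟨_, hr⟩)⟩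
  · injection hc with hc; injection hd with hd; subst hc; subst hd; exact h hcd
  · simp at hr
  · injection hc with hc; injection hd with hd; subst hc; subst hd; exact h hcd.symm
  · simp at hr

open Fin.CommRing Fin.NatCast in
lemma wheel_coloring_const {n : ℕ} (hn : 4 < n) {τ : Fin (n - 1) ⊕ Unit → ℕ}
    (hτ : IsMVDColoring (wheelGraph n) τ) : ∀ v, τ v = τ (Sum.inr ()) := by
  have hm : 4 ≤ n - 1 := by omega
  haveI : NeZero (n - 1) := ⟨by omega⟩
  rintro (a | u)
  swap
  · cases u; rfl
  have v1 : ((1 : ℕ) : Fin (n - 1)) = (1 : Fin (n - 1)) := by push_cast; ring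
  have v2 : ((2 : ℕ) : Fin (n - 1)) = (2 : Fin (n - 1)) := by push_cast; ring
  set x := a - 1 with hx
  set y := a + 1 with hy
  have hxy : x ≠ y := by
    intro h
    have h2 : (2 : Fin (n - 1)) = 0 := by rw [hx, hy] at h; linear_combination -h
    have := congrArg Fin.val h2
    rw [← v2, Fin.val_cast_of_lt (by omega)] at this
    simp at this
  have hnadj : ¬ (cycleGraph (n - 1)).Adj x y := by
    rw [SimpleGraph.cycleGraph_adj']
    have e2 : y - x = 2 := by rw [hx, hy]; ring
    have e1 : x - y = (((n - 1) - 2 : ℕ) : Fin (n - 1)) := by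
      have h0 : (((n - 1) - 2 : ℕ) : Fin (n - 1)) + 2 = 0 := by
        rw [← v2, ← Nat.cast_add]
        have : (n-1) - 2 + 2 = n - 1 := by omega
        rw [this, Fin.natCast_self]
      rw [hx, hy]; linear_combination -h0
    rw [e1, e2, ← v2, Fin.val_cast_of_lt (by omega), Fin.val_cast_of_lt (by omega)]
    omega
  have hax : (cycleGraph (n - 1)).Adj x a := by
    rw [SimpleGraph.cycleGraph_adj']
    right
    have : a - x = 1 := by rw [hx]; ring
    rw [this, ← v1, Fin.val_cast_of_lt (by omega)]
  have hay : (cycleGraph (n - 1)).Adj a y := by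
    rw [SimpleGraph.cycleGraph_adj']
    right
    have : y - a = 1 := by rw [hy]; ring
    rw [this, ← v1, Fin.val_cast_of_lt (by omega)]
  obtain ⟨S, ⟨hxS, hyS, hsep⟩, hmono⟩ :=
    hτ (Sum.inl x) (Sum.inl y) (by simpa using hxy) (wheel_not_adj_rim hnadj)
  have hhubS : Sum.inr () ∈ S := by
    obtain ⟨v, hv, hvS⟩ := hsep
      (Walk.cons (wheel_adj_hub x) (Walk.cons ((wheel_adj_hub y).symm) Walk.nil))
    simp only [Walk.support_cons, Walk.support_nil, List.mem_cons, List.mem_singleton,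
      List.not_mem_nil, or_false] at hv
    rcases hv with rfl | rfl | rfl
    · exact absurd hvS hxS
    · exact hvS
    · exact absurd hvS hyS
  have haS : Sum.inl a ∈ S := by
    obtain ⟨v, hv, hvS⟩ := hsep
      (Walk.cons (wheel_adj_rim hax) (Walk.cons (wheel_adj_rim hay) Walk.nil))
    simp only [Walk.support_cons, Walk.support_nil, List.mem_cons, List.mem_singleton,
      List.not_mem_nil, or_false] at hv
    rcases hv with rfl | rfl | rfl
    · exact absurd hvS hxS
    · exact hvS
    · exact absurd hvS hyS
  exact hmono _ haS _ hhubS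

theorem mvd_wheel (n : ℕ) (hn : 4 < n) : mvd (wheelGraph n) = 1 := by
  have hset : {k | ∃ τ : Fin (n - 1) ⊕ Unit → ℕ,
      IsMVDColoring (wheelGraph n) τ ∧ (Set.range τ).ncard = k} = {1} := by
    ext k
    simp only [Set.mem_setOf_eq, Set.mem_singleton_iff]
    constructor
    · rintro ⟨τ, hτ, rfl⟩
      have hc := wheel_coloring_const hn hτ
      have hr : Set.range τ = {τ (Sum.inr ())} :=
        Set.eq_singleton_iff_unique_mem.mpr ⟨⟨_, rfl⟩, by rintro b ⟨v, rfl⟩; exact hc v⟩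
      rw [hr, Set.ncard_singleton]
    · rintro rfl
      refine ⟨fun _ => 0, const_isMVD _, ?_⟩
      rw [Set.range_const, Set.ncard_singleton]
  unfold mvd
  rw [hset, csSup_singleton]
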